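/- Let 𝚇_1, 𝚇_2, … be i.i.d. integer-valued random variables with E[𝚇_1] = 0 and E[𝚇_1²] ∈ (0,∞), and for an integer x ≥ 0 let S_0 = x and S_n = S_{n−1} + 𝚇_n. Define the survival probabilities Q(x,t) = P(S_1 ≥ 0, S_2 ≥ 0, …, S_t ≥ 0 | S_0 = x) and the generating functions Q̃_x(u) = Σ_{t≥0} u^t Q(x,t). Then for every integer x ≥ 0 and every u ∈ [0,1): Q̃_x(u) ≤ (x+1)·Q̃_0(u). -/

import Mathlib

open MeasureTheory ProbabilityTheory

noncomputable section



open scoped ENNReal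


lemma int_measurableSet (s : Set ℤ) : MeasurableSet s := s.to_countable.measurableSet

lemma aux_map_eq_pi {Ω : Type*} [MeasurableSpace Ω] (μ : Measure Ω) [IsProbabilityMeasure μ]
    (X : ℕ → Ω → ℤ) (hmeas : ∀ n, Measurable (X n))
    (hindep : iIndepFun X μ)
    (hident : ∀ n, IdentDistrib (X n) (X 1) μ μ) (s r : ℕ) :
    Measure.map (fun ω (i : Fin r) => X (s + 1 + i) ω) μ
      = Measure.pi (fun _ : Fin r => Measure.map (X 1) μ) := by
  have hpm : IsProbabilityMeasure (Measure.map (X 1) μ) :=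
    Measure.isProbabilityMeasure_map (hmeas 1).aemeasurable
  refine (Measure.pi_eq fun s' _ => ?_).symm
  have hF : Measurable (fun ω (i : Fin r) => X (s + 1 + i) ω) :=
    measurable_pi_lambda _ fun i => hmeas _
  rw [Measure.map_apply hF (MeasurableSet.univ_pi fun i => int_measurableSet _)]
  have hpre : (fun ω (i : Fin r) => X (s + 1 + i) ω) ⁻¹' Set.univ.pi s'
      = ⋂ i : Fin r, X (s + 1 + (i : ℕ)) ⁻¹' s' i := by
    ext ω; simp [Set.mem_pi]
  rw [hpre]
  set sets : ℕ → Set ℤ := fun n =>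
    if h : s + 1 ≤ n ∧ n - (s + 1) < r then s' ⟨n - (s + 1), h.2⟩ else Set.univ with hsets
  have hinj : Function.Injective (fun i : Fin r => s + 1 + (i : ℕ)) := by
    intro a b h; simp only [add_right_inj] at h; exact Fin.ext h
  have hkey : ∀ i : Fin r, sets (s + 1 + (i : ℕ)) = s' i := by
    intro i
    have h1 : s + 1 ≤ s + 1 + (i : ℕ) ∧ (s + 1 + (i : ℕ)) - (s + 1) < r :=
      ⟨by omega, by simp [Nat.add_sub_cancel_left]⟩
    simp only [hsets]
    rw [dif_pos h1]
    have h2 : (⟨s + 1 + (i : ℕ) - (s + 1), h1.2⟩ : Fin r) = i := by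
      apply Fin.ext; simp
    rw [h2]
  have hI := hindep.measure_inter_preimage_eq_mul
    (Finset.image (fun i : Fin r => s + 1 + (i : ℕ)) Finset.univ)
    (sets := sets) (fun i _ => int_measurableSet _)
  have hIm : (⋂ n ∈ Finset.image (fun i : Fin r => s + 1 + (i : ℕ)) Finset.univ,
      X n ⁻¹' sets n) = ⋂ i : Fin r, X (s + 1 + (i : ℕ)) ⁻¹' s' i := by
    rw [Finset.set_biInter_finset_image]
    simp only [hkey]
    ext ω; simp
  rw [hIm] at hI
  rw [hI]
  rw [Finset.prod_image (fun a _ b _ h => hinj h)]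
  refine Finset.prod_congr rfl fun i _ => ?_
  rw [hkey i, ← (hident (s + 1 + (i : ℕ))).map_eq,
    Measure.map_apply (hmeas _) (int_measurableSet _)]

lemma aux_shift_measure {Ω : Type*} [MeasurableSpace Ω] (μ : Measure Ω) [IsProbabilityMeasure μ]
    (X : ℕ → Ω → ℤ) (hmeas : ∀ n, Measurable (X n))
    (hindep : iIndepFun X μ)
    (hident : ∀ n, IdentDistrib (X n) (X 1) μ μ) (s r : ℕ) :
    μ {ω | ∀ m ∈ Finset.Icc 1 r, 0 ≤ ∑ i ∈ Finset.range m, X (s + 1 + i) ω}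
      = μ {ω | ∀ m ∈ Finset.Icc 1 r, 0 ≤ ∑ i ∈ Finset.range m, X (0 + 1 + i) ω} := by
  classical
  set T : Set (Fin r → ℤ) :=
    {v | ∀ m ∈ Finset.Icc 1 r,
      0 ≤ ∑ i ∈ Finset.range m, (if h : i < r then v ⟨i, h⟩ else 0)} with hT
  have hTm : MeasurableSet T := by
    have : T = ⋂ m ∈ Finset.Icc 1 r,
        (fun v : Fin r → ℤ => ∑ i ∈ Finset.range m, (if h : i < r then v ⟨i, h⟩ else 0)) ⁻¹'
          (Set.Ici 0) := by
      ext v; simp [hT, Set.mem_iInter]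
    rw [this]
    refine MeasurableSet.biInter (Finset.Icc 1 r).countable_toSet fun m _ => ?_
    have hsum : Measurable (fun v : Fin r → ℤ =>
        ∑ i ∈ Finset.range m, (if h : i < r then v ⟨i, h⟩ else 0)) := by
      apply Finset.measurable_sum
      intro i _
      by_cases h : i < r
      · simp only [dif_pos h]; exact measurable_pi_apply _
      · simp only [dif_neg h]; exact measurable_const
    exact hsum (int_measurableSet _)
  have hpre : ∀ s : ℕ,
      (fun ω (i : Fin r) => X (s + 1 + (i : ℕ)) ω) ⁻¹' T
        = {ω | ∀ m ∈ Finset.Icc 1 r, 0 ≤ ∑ i ∈ Finset.range m, X (s + 1 + i) ω} := by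
    intro s
    ext ω
    simp only [Set.mem_preimage, hT, Set.mem_setOf_eq]
    refine forall₂_congr fun m hm => ?_
    have hmr : m ≤ r := (Finset.mem_Icc.mp hm).2
    rw [Finset.sum_congr rfl
      (fun i hi => dif_pos (lt_of_lt_of_le (Finset.mem_range.mp hi) hmr))]
  have hF : ∀ s : ℕ, Measurable (fun ω (i : Fin r) => X (s + 1 + (i : ℕ)) ω) :=
    fun s => measurable_pi_lambda _ fun i => hmeas _
  have e1 := Measure.map_apply (μ := μ) (hF s) hTm
  have e2 := Measure.map_apply (μ := μ) (hF 0) hTm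
  rw [hpre] at e1 e2
  rw [← e1, ← e2, aux_map_eq_pi μ X hmeas hindep hident s r,
    aux_map_eq_pi μ X hmeas hindep hident 0 r]

lemma aux_indep_mul {Ω : Type*} [MeasurableSpace Ω] (μ : Measure Ω) [IsProbabilityMeasure μ]
    (X : ℕ → Ω → ℤ) (hmeas : ∀ n, Measurable (X n))
    (hindep : iIndepFun X μ)
    (j s t : ℕ) (hst : s ≤ t) :
    μ ({ω | (∀ n ∈ Finset.Ico 1 s, -(j : ℤ) < ∑ i ∈ Finset.Icc 1 n, X i ω) ∧
          ∑ i ∈ Finset.Icc 1 s, X i ω = -(j : ℤ)} ∩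
        {ω | ∀ m ∈ Finset.Icc 1 (t - s), 0 ≤ ∑ i ∈ Finset.Icc (s + 1) (s + m), X i ω})
      = μ {ω | (∀ n ∈ Finset.Ico 1 s, -(j : ℤ) < ∑ i ∈ Finset.Icc 1 n, X i ω) ∧
          ∑ i ∈ Finset.Icc 1 s, X i ω = -(j : ℤ)} *
        μ {ω | ∀ m ∈ Finset.Icc 1 (t - s), 0 ≤ ∑ i ∈ Finset.Icc (s + 1) (s + m), X i ω} := by
  classical
  have hdisj : Disjoint (Finset.Icc 1 s) (Finset.Icc (s + 1) t) := by
    rw [Finset.disjoint_left]; intro a ha hb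
    rw [Finset.mem_Icc] at ha hb; omega
  have hIF := hindep.indepFun_finset (Finset.Icc 1 s) (Finset.Icc (s + 1) t) hdisj hmeas
  -- the coordinate extension maps
  set w1 : (↥(Finset.Icc 1 s) → ℤ) → ℕ → ℤ :=
    fun v i => if h : i ∈ Finset.Icc 1 s then v ⟨i, h⟩ else 0 with hw1
  set w2 : (↥(Finset.Icc (s + 1) t) → ℤ) → ℕ → ℤ :=
    fun v i => if h : i ∈ Finset.Icc (s + 1) t then v ⟨i, h⟩ else 0 with hw2
  have hw1meas : ∀ i, Measurable fun v => w1 v i := by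
    intro i; by_cases h : i ∈ Finset.Icc 1 s
    · simp only [hw1, dif_pos h]; exact measurable_pi_apply _
    · simp only [hw1, dif_neg h]; exact measurable_const
  have hw2meas : ∀ i, Measurable fun v => w2 v i := by
    intro i; by_cases h : i ∈ Finset.Icc (s + 1) t
    · simp only [hw2, dif_pos h]; exact measurable_pi_apply _
    · simp only [hw2, dif_neg h]; exact measurable_const
  set A' : Set (↥(Finset.Icc 1 s) → ℤ) :=
    {v | (∀ n ∈ Finset.Ico 1 s, -(j : ℤ) < ∑ i ∈ Finset.Icc 1 n, w1 v i) ∧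
      ∑ i ∈ Finset.Icc 1 s, w1 v i = -(j : ℤ)} with hA'
  set C' : Set (↥(Finset.Icc (s + 1) t) → ℤ) :=
    {v | ∀ m ∈ Finset.Icc 1 (t - s), 0 ≤ ∑ i ∈ Finset.Icc (s + 1) (s + m), w2 v i} with hC'
  have hA'm : MeasurableSet A' := by
    have : A' = (⋂ n ∈ (Finset.Ico 1 s : Finset ℕ),
        {v | -(j : ℤ) < ∑ i ∈ Finset.Icc 1 n, w1 v i}) ∩
        {v | ∑ i ∈ Finset.Icc 1 s, w1 v i = -(j : ℤ)} := by
      ext v; simp [hA', Set.mem_iInter]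
    rw [this]
    refine MeasurableSet.inter ?_ ?_
    · refine MeasurableSet.biInter (Finset.Ico 1 s).countable_toSet fun n _ => ?_
      exact (Finset.measurable_sum _ fun i _ => hw1meas i) (int_measurableSet (Set.Ioi _))
    · exact (Finset.measurable_sum _ fun i _ => hw1meas i) (int_measurableSet {-(j : ℤ)})
  have hC'm : MeasurableSet C' := by
    have : C' = ⋂ m ∈ (Finset.Icc 1 (t - s) : Finset ℕ),
        {v | 0 ≤ ∑ i ∈ Finset.Icc (s + 1) (s + m), w2 v i} := by
      ext v; simp [hC', Set.mem_iInter]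
    rw [this]
    refine MeasurableSet.biInter (Finset.Icc 1 (t - s)).countable_toSet fun m _ => ?_
    exact (Finset.measurable_sum _ fun i _ => hw2meas i) (int_measurableSet (Set.Ici _))
  have hApre : (fun ω (i : ↥(Finset.Icc 1 s)) => X i ω) ⁻¹' A'
      = {ω | (∀ n ∈ Finset.Ico 1 s, -(j : ℤ) < ∑ i ∈ Finset.Icc 1 n, X i ω) ∧
          ∑ i ∈ Finset.Icc 1 s, X i ω = -(j : ℤ)} := by
    ext ω
    simp only [Set.mem_preimage, hA', Set.mem_setOf_eq]
    have key : ∀ n ≤ s, ∑ i ∈ Finset.Icc 1 n, w1 (fun i : ↥(Finset.Icc 1 s) => X i ω) i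
        = ∑ i ∈ Finset.Icc 1 n, X i ω := by
      intro n hn
      refine Finset.sum_congr rfl fun i hi => ?_
      rw [Finset.mem_Icc] at hi
      have : i ∈ Finset.Icc 1 s := Finset.mem_Icc.mpr ⟨hi.1, le_trans hi.2 hn⟩
      simp only [hw1, dif_pos this]
    refine and_congr (forall₂_congr fun n hn => ?_) ?_
    · rw [key n (le_of_lt (Finset.mem_Ico.mp hn).2)]
    · rw [key s le_rfl]
  have hCpre : (fun ω (i : ↥(Finset.Icc (s + 1) t)) => X i ω) ⁻¹' C'
      = {ω | ∀ m ∈ Finset.Icc 1 (t - s), 0 ≤ ∑ i ∈ Finset.Icc (s + 1) (s + m), X i ω} := by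
    ext ω
    simp only [Set.mem_preimage, hC', Set.mem_setOf_eq]
    refine forall₂_congr fun m hm => ?_
    have hm2 : m ≤ t - s := (Finset.mem_Icc.mp hm).2
    have key : ∑ i ∈ Finset.Icc (s + 1) (s + m),
        w2 (fun i : ↥(Finset.Icc (s + 1) t) => X i ω) i
        = ∑ i ∈ Finset.Icc (s + 1) (s + m), X i ω := by
      refine Finset.sum_congr rfl fun i hi => ?_
      rw [Finset.mem_Icc] at hi
      have : i ∈ Finset.Icc (s + 1) t := Finset.mem_Icc.mpr ⟨hi.1, by omega⟩
      simp only [hw2, dif_pos this]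
    rw [key]
  rw [← hApre, ← hCpre]
  exact hIF.measure_inter_preimage_eq_mul A' C' hA'm hC'm

lemma aux_sum_split {Ω : Type*} (X : ℕ → Ω → ℤ) (ω : Ω) (s n : ℕ) (h : s ≤ n) :
    (∑ i ∈ Finset.Icc 1 s, X i ω) + ∑ i ∈ Finset.Icc (s + 1) n, X i ω
      = ∑ i ∈ Finset.Icc 1 n, X i ω := by
  rw [show (1 : ℕ) = 0 + 1 from rfl, Finset.Icc_add_one_left_eq_Ioc, Finset.Icc_add_one_left_eq_Ioc, Nat.zero_add,
    Finset.Icc_add_one_left_eq_Ioc]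
  exact Finset.sum_Ioc_consecutive _ (Nat.zero_le s) h

lemma aux_sum_shift {Ω : Type*} (X : ℕ → Ω → ℤ) (ω : Ω) (s m : ℕ) :
    ∑ i ∈ Finset.Icc (s + 1) (s + m), X i ω = ∑ i ∈ Finset.range m, X (s + 1 + i) ω := by
  rw [← Finset.Ico_add_one_right_eq_Icc, Finset.sum_Ico_eq_sum_range]
  have h : s + m + 1 - (s + 1) = m := by omega
  rw [h]

/-- For a random walk `S_n = x + 𝚇_1 + ⋯ + 𝚇_n` with i.i.d. integer-valued
increments of mean zero and finite positive second moment, the generating functions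
`Q̃_x(u) = Σ_t u^t Q(x,t)` of the survival probabilities
`Q(x,t) = P(S_1 ≥ 0, …, S_t ≥ 0)` satisfy `Q̃_x(u) ≤ (x+1)·Q̃_0(u)` for every integer
`x ≥ 0` and every `u ∈ [0,1)`. -/
theorem survival_generating_function_bound
    {Ω : Type*} [MeasurableSpace Ω] (μ : Measure Ω) [IsProbabilityMeasure μ]
    (X : ℕ → Ω → ℤ) (hmeas : ∀ n, Measurable (X n))
    (hindep : iIndepFun X μ)
    (hident : ∀ n, IdentDistrib (X n) (X 1) μ μ)
    (hmean : ∫ ω, ((X 1 ω : ℝ)) ∂μ = 0)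
    (hL2 : Integrable (fun ω => ((X 1 ω : ℝ)) ^ 2) μ)
    (hpos : 0 < ∫ ω, ((X 1 ω : ℝ)) ^ 2 ∂μ) :
    ∀ (x : ℕ) (u : ℝ), 0 ≤ u → u < 1 →
      (∑' t : ℕ, u ^ t *
          (μ {ω | ∀ n ∈ Finset.Icc 1 t,
            0 ≤ (x : ℤ) + ∑ i ∈ Finset.Icc 1 n, X i ω}).toReal) ≤
        ((x : ℝ) + 1) *
          ∑' t : ℕ, u ^ t *
            (μ {ω | ∀ n ∈ Finset.Icc 1 t, 0 ≤ ∑ i ∈ Finset.Icc 1 n, X i ω}).toReal := by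
  classical
  intro x u hu hu1
  set S : ℕ → Ω → ℤ := fun n ω => ∑ i ∈ Finset.Icc 1 n, X i ω with hS
  have hSMeas : ∀ n, Measurable (S n) := fun n => Finset.measurable_sum _ fun i _ => hmeas i
  set E : ℕ → Set Ω := fun t => {ω | ∀ n ∈ Finset.Icc 1 t, 0 ≤ (x : ℤ) + S n ω} with hE
  set Sv : ℕ → Set Ω := fun t => {ω | ∀ n ∈ Finset.Icc 1 t, 0 ≤ S n ω} with hSv
  set A : ℕ → ℕ → Set Ω := fun j s =>
    {ω | (∀ n ∈ Finset.Ico 1 s, -(j : ℤ) < S n ω) ∧ S s ω = -(j : ℤ)} with hA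
  set C : ℕ → ℕ → Set Ω := fun s t =>
    {ω | ∀ m ∈ Finset.Icc 1 (t - s), 0 ≤ ∑ i ∈ Finset.Icc (s + 1) (s + m), X i ω} with hC
  set q : ℕ → ℝ≥0∞ := fun r => μ (Sv r) with hq
  -- measurability
  have hAm : ∀ j s, MeasurableSet (A j s) := by
    intro j s
    have : A j s = (⋂ n ∈ (Finset.Ico 1 s : Finset ℕ), S n ⁻¹' Set.Ioi (-(j : ℤ))) ∩
        S s ⁻¹' {-(j : ℤ)} := by
      ext ω; simp [hA, Set.mem_iInter]
    rw [this]
    exact ((MeasurableSet.biInter (Finset.Ico 1 s).countable_toSet fun n _ =>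
      hSMeas n (int_measurableSet _))).inter (hSMeas s (int_measurableSet _))
  -- μ(C s t) = q (t - s)
  have hCq : ∀ s t : ℕ, μ (C s t) = q (t - s) := by
    intro s t
    have e1 : C s t = {ω | ∀ m ∈ Finset.Icc 1 (t - s),
        0 ≤ ∑ i ∈ Finset.range m, X (s + 1 + i) ω} := by
      ext ω
      simp only [hC, Set.mem_setOf_eq]
      exact forall₂_congr fun m _ => by rw [aux_sum_shift]
    have e2 : {ω | ∀ m ∈ Finset.Icc 1 (t - s),
        0 ≤ ∑ i ∈ Finset.range m, X (0 + 1 + i) ω} = Sv (t - s) := by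
      ext ω
      simp only [hSv, Set.mem_setOf_eq]
      refine forall₂_congr fun m _ => ?_
      have hSm : S m ω = ∑ i ∈ Finset.range m, X (0 + 1 + i) ω := by
        simp only [hS]
        rw [show Finset.Icc 1 m = Finset.Icc (0 + 1) (0 + m) by norm_num, aux_sum_shift]
      rw [hSm]
    rw [e1, aux_shift_measure μ X hmeas hindep hident s (t - s), e2]
  -- inclusion
  have hsub : ∀ t, E t ⊆ Sv t ∪ ⋃ j ∈ Finset.Icc 1 x, ⋃ s ∈ Finset.Icc 1 t, (A j s ∩ C s t) := by
    intro t ω hω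
    by_cases hSvt : ω ∈ Sv t
    · exact Or.inl hSvt
    refine Or.inr ?_
    simp only [hSv, Set.mem_setOf_eq, not_forall] at hSvt
    obtain ⟨n₀, hn₀, hn₀neg⟩ := hSvt
    have hn₀neg' : S n₀ ω < 0 := by omega
    have hIne : (Finset.Icc 1 t).Nonempty := ⟨n₀, hn₀⟩
    have hImg : ((Finset.Icc 1 t).image fun n => S n ω).Nonempty := hIne.image _
    set m0 : ℤ := ((Finset.Icc 1 t).image fun n => S n ω).min' hImg with hm0
    have hmin : ∀ n ∈ Finset.Icc 1 t, m0 ≤ S n ω := fun n hn =>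
      Finset.min'_le _ _ (Finset.mem_image_of_mem _ hn)
    obtain ⟨n₁, hn₁, hn₁eq⟩ := Finset.mem_image.mp (Finset.min'_mem _ hImg)
    have hm0neg : m0 < 0 := lt_of_le_of_lt (hmin n₀ hn₀) hn₀neg'
    have hm0ge : -(x : ℤ) ≤ m0 := by
      have := hω n₁ hn₁
      omega
    set j : ℕ := (-m0).toNat with hj
    have hjz : (j : ℤ) = -m0 := Int.toNat_of_nonneg (by omega)
    have hjmem : j ∈ Finset.Icc 1 x := by
      rw [Finset.mem_Icc]
      omega
    have hFne : ((Finset.Icc 1 t).filter fun n => S n ω = m0).Nonempty :=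
      ⟨n₁, Finset.mem_filter.mpr ⟨hn₁, hn₁eq⟩⟩
    set s : ℕ := ((Finset.Icc 1 t).filter fun n => S n ω = m0).min' hFne with hs
    have hsmem : s ∈ (Finset.Icc 1 t).filter (fun n => S n ω = m0) := Finset.min'_mem _ hFne
    rw [Finset.mem_filter] at hsmem
    obtain ⟨hsI, hsval⟩ := hsmem
    rw [Finset.mem_Icc] at hsI
    have hsleast : ∀ n ∈ Finset.Icc 1 t, S n ω = m0 → s ≤ n := fun n hn heq =>
      Finset.min'_le _ _ (Finset.mem_filter.mpr ⟨hn, heq⟩)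
    clear_value s
    clear_value m0
    refine Set.mem_biUnion hjmem (Set.mem_biUnion (Finset.mem_Icc.mpr hsI) ?_)
    constructor
    · -- ω ∈ A j s
      refine ⟨fun n hn => ?_, by rw [hsval, hjz, neg_neg]⟩
      rw [Finset.mem_Ico] at hn
      have hnI : n ∈ Finset.Icc 1 t := Finset.mem_Icc.mpr ⟨hn.1, by omega⟩
      have h1 : m0 ≤ S n ω := hmin n hnI
      have h2 : S n ω ≠ m0 := by
        intro hsq
        have : s ≤ n := hsleast n hnI hsq
        omega
      rw [hjz, neg_neg]
      omega
    · -- ω ∈ C s t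
      intro m hm
      rw [Finset.mem_Icc] at hm
      have hsm : s + m ∈ Finset.Icc 1 t := Finset.mem_Icc.mpr ⟨by omega, by omega⟩
      have h1 : m0 ≤ S (s + m) ω := hmin _ hsm
      have h2 : (∑ i ∈ Finset.Icc 1 s, X i ω) + ∑ i ∈ Finset.Icc (s + 1) (s + m), X i ω
          = ∑ i ∈ Finset.Icc 1 (s + m), X i ω := aux_sum_split X ω s (s + m) (by omega)
      have h3 : S s ω + ∑ i ∈ Finset.Icc (s + 1) (s + m), X i ω = S (s + m) ω := h2
      omega
  have hle1 : ∀ s : Set Ω, μ s ≤ 1 :=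
    fun s => (measure_mono (Set.subset_univ _)).trans measure_univ.le
  -- measure bound
  have hmb : ∀ t, μ (E t) ≤ μ (Sv t) +
      ∑ j ∈ Finset.Icc 1 x, ∑ s ∈ Finset.Icc 1 t, μ (A j s) * q (t - s) := by
    intro t
    calc μ (E t) ≤ μ (Sv t ∪ ⋃ j ∈ Finset.Icc 1 x, ⋃ s ∈ Finset.Icc 1 t, (A j s ∩ C s t)) :=
          measure_mono (hsub t)
      _ ≤ μ (Sv t) + μ (⋃ j ∈ Finset.Icc 1 x, ⋃ s ∈ Finset.Icc 1 t, (A j s ∩ C s t)) :=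
          measure_union_le _ _
      _ ≤ μ (Sv t) + ∑ j ∈ Finset.Icc 1 x, μ (⋃ s ∈ Finset.Icc 1 t, (A j s ∩ C s t)) :=
          add_le_add_right (measure_biUnion_finset_le _ _) _
      _ ≤ μ (Sv t) + ∑ j ∈ Finset.Icc 1 x, ∑ s ∈ Finset.Icc 1 t, μ (A j s ∩ C s t) :=
          add_le_add_right (Finset.sum_le_sum fun j _ => measure_biUnion_finset_le _ _) _
      _ = μ (Sv t) + ∑ j ∈ Finset.Icc 1 x, ∑ s ∈ Finset.Icc 1 t, μ (A j s) * q (t - s) := by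
          congr 1
          refine Finset.sum_congr rfl fun j _ => Finset.sum_congr rfl fun s hs => ?_
          have hst : s ≤ t := (Finset.mem_Icc.mp hs).2
          rw [← hCq s t]
          exact aux_indep_mul μ X hmeas hindep j s t hst
  -- total mass of ladder events
  have hAunion : ∀ j, 1 ≤ j → (∑' s, μ (A j s)) ≤ 1 := by
    intro j hj
    have key : ∀ s s', s < s' → Disjoint (A j s) (A j s') := by
      intro s s' hlt
      rw [Set.disjoint_left]
      intro ω hω hω'
      have h1 : S s ω = -(j : ℤ) := hω.2
      by_cases hs0 : 1 ≤ s
      · have := hω'.1 s (Finset.mem_Ico.mpr ⟨hs0, hlt⟩)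
        omega
      · have hs0' : s = 0 := by omega
        subst hs0'
        have hz : S 0 ω = 0 := by
          simp only [hS]
          rw [show Finset.Icc 1 0 = ∅ from Finset.Icc_eq_empty (by omega)]
          simp
        omega
    have hd : Pairwise (Function.onFun Disjoint fun s => A j s) := by
      intro s s' hne
      rcases lt_or_gt_of_ne hne with h | h
      · exact key _ _ h
      · exact (key _ _ h).symm
    calc (∑' s, μ (A j s)) = μ (⋃ s, A j s) := (measure_iUnion hd fun s => hAm j s).symm
      _ ≤ 1 := hle1 _
  -- series
  set v : ℝ≥0∞ := ENNReal.ofReal u with hv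
  have hv1 : v ≤ 1 := by rw [hv]; exact ENNReal.ofReal_le_one.mpr hu1.le
  have hvlt : v < 1 := by rw [hv]; exact ENNReal.ofReal_lt_one.mpr hu1
  set Qe : ℝ≥0∞ := ∑' r, v ^ r * q r with hQe
  have hjterm : ∀ j, 1 ≤ j →
      (∑' t, ∑ s ∈ Finset.Icc 1 t, v ^ t * (μ (A j s) * q (t - s))) ≤ Qe := by
    intro j hj
    set g : ℕ × ℕ → ℝ≥0∞ := fun p => (v ^ p.1 * μ (A j p.1)) * (v ^ p.2 * q p.2) with hg
    have step1 : ∀ t, ∑ s ∈ Finset.Icc 1 t, v ^ t * (μ (A j s) * q (t - s))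
        = ∑ s ∈ Finset.Icc 1 t, g (s, t - s) := by
      intro t
      refine Finset.sum_congr rfl fun s hs => ?_
      have hst : s ≤ t := (Finset.mem_Icc.mp hs).2
      have hvp : v ^ t = v ^ s * v ^ (t - s) := by
        rw [← pow_add]
        congr 1
        omega
      simp only [hg]
      rw [hvp]
      ring
    have hinj : Function.Injective
        (fun p : (Σ t : ℕ, ((Finset.Icc 1 t : Finset ℕ) : Type)) =>
          (((p.2 : ℕ), p.1 - (p.2 : ℕ)) : ℕ × ℕ)) := by
      rintro ⟨t, s, hs⟩ ⟨t', s', hs'⟩ h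
      simp only [Prod.mk.injEq] at h
      obtain ⟨h1, h2⟩ := h
      have ht : s ≤ t := (Finset.mem_Icc.mp hs).2
      have ht' : s' ≤ t' := (Finset.mem_Icc.mp hs').2
      have htt : t = t' := by omega
      subst htt
      subst h1
      rfl
    calc (∑' t, ∑ s ∈ Finset.Icc 1 t, v ^ t * (μ (A j s) * q (t - s)))
        = ∑' t, ∑' (s : ((Finset.Icc 1 t : Finset ℕ) : Type)), g ((s : ℕ), t - (s : ℕ)) := by
          refine tsum_congr fun t => ?_
          rw [step1]
          exact (Finset.tsum_subtype _ _).symm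
      _ = ∑' (p : Σ t : ℕ, ((Finset.Icc 1 t : Finset ℕ) : Type)),
            g ((p.2 : ℕ), p.1 - (p.2 : ℕ)) :=
          (ENNReal.tsum_sigma' (fun p : (Σ t : ℕ, ((Finset.Icc 1 t : Finset ℕ) : Type)) =>
            g ((p.2 : ℕ), p.1 - (p.2 : ℕ)))).symm
      _ ≤ ∑' p : ℕ × ℕ, g p := ENNReal.tsum_comp_le_tsum_of_injective hinj g
      _ = (∑' s, v ^ s * μ (A j s)) * Qe := by
          rw [ENNReal.tsum_prod']
          simp only [hg]
          have hinner : ∀ a : ℕ, (∑' b : ℕ, (v ^ a * μ (A j a)) * (v ^ b * q b))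
              = (v ^ a * μ (A j a)) * Qe := fun a => by
            rw [ENNReal.tsum_mul_left, ← hQe]
          rw [tsum_congr hinner, ENNReal.tsum_mul_right]
      _ ≤ 1 * Qe := by
          refine mul_le_mul' ?_ le_rfl
          calc (∑' s, v ^ s * μ (A j s)) ≤ ∑' s, μ (A j s) :=
                ENNReal.tsum_le_tsum fun s => by
                  calc v ^ s * μ (A j s) ≤ 1 * μ (A j s) :=
                        mul_le_mul_left (pow_le_one' hv1 s) _
                    _ = μ (A j s) := one_mul _
            _ ≤ 1 := hAunion j hj
      _ = Qe := one_mul _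
  have hmain : (∑' t, v ^ t * μ (E t)) ≤ ((x : ℝ≥0∞) + 1) * Qe := by
    calc (∑' t, v ^ t * μ (E t))
        ≤ ∑' t, v ^ t * (μ (Sv t) +
            ∑ j ∈ Finset.Icc 1 x, ∑ s ∈ Finset.Icc 1 t, μ (A j s) * q (t - s)) :=
          ENNReal.tsum_le_tsum fun t => mul_le_mul_right (hmb t) _
      _ = ∑' t, (v ^ t * μ (Sv t) +
            ∑ j ∈ Finset.Icc 1 x, ∑ s ∈ Finset.Icc 1 t, v ^ t * (μ (A j s) * q (t - s))) := by
          refine tsum_congr fun t => ?_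
          rw [mul_add]
          congr 1
          rw [Finset.mul_sum]
          exact Finset.sum_congr rfl fun j _ => by rw [Finset.mul_sum]
      _ = Qe + ∑' t, ∑ j ∈ Finset.Icc 1 x,
            ∑ s ∈ Finset.Icc 1 t, v ^ t * (μ (A j s) * q (t - s)) := by
          rw [ENNReal.tsum_add, ← hQe]
      _ = Qe + ∑ j ∈ Finset.Icc 1 x, ∑' t,
            ∑ s ∈ Finset.Icc 1 t, v ^ t * (μ (A j s) * q (t - s)) := by
          congr 1
          exact Summable.tsum_finsetSum fun j _ => ENNReal.summable
      _ ≤ Qe + ∑ j ∈ Finset.Icc 1 x, Qe :=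
          add_le_add_right (Finset.sum_le_sum fun j hj => hjterm j (Finset.mem_Icc.mp hj).1) _
      _ = ((x : ℝ≥0∞) + 1) * Qe := by
          rw [Finset.sum_const, Nat.card_Icc]
          simp only [Nat.add_sub_cancel, nsmul_eq_mul]
          ring
  have hQtop : Qe ≠ ⊤ := by
    have h1 : Qe ≤ ∑' t : ℕ, v ^ t := by
      rw [hQe]
      exact ENNReal.tsum_le_tsum fun t => by
        calc v ^ t * q t ≤ v ^ t * 1 := mul_le_mul_right (hle1 _) _
          _ = v ^ t := mul_one _
    rw [ENNReal.tsum_geometric] at h1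
    have h2 : (1 - v)⁻¹ ≠ ⊤ := ENNReal.inv_ne_top.mpr (by
      rw [ne_eq, tsub_eq_zero_iff_le]
      exact not_le.mpr hvlt)
    exact ne_top_of_le_ne_top h2 h1
  have htne : ∀ (B : Set Ω) (t : ℕ), v ^ t * μ B ≠ ⊤ :=
    fun B t => ENNReal.mul_ne_top (ENNReal.pow_ne_top (by rw [hv]; exact ENNReal.ofReal_ne_top))
      (measure_ne_top μ _)
  have hreal : ∀ B : ℕ → Set Ω,
      (∑' t, u ^ t * (μ (B t)).toReal) = (∑' t, v ^ t * μ (B t)).toReal := by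
    intro B
    rw [ENNReal.tsum_toReal_eq fun t => htne _ t]
    refine tsum_congr fun t => ?_
    rw [ENNReal.toReal_mul, ENNReal.toReal_pow, hv, ENNReal.toReal_ofReal hu]
  calc (∑' t, u ^ t * (μ (E t)).toReal)
      = (∑' t, v ^ t * μ (E t)).toReal := hreal E
    _ ≤ (((x : ℝ≥0∞) + 1) * Qe).toReal := by
        refine ENNReal.toReal_mono ?_ hmain
        exact ENNReal.mul_ne_top (by simp) hQtop
    _ = ((x : ℝ) + 1) * Qe.toReal := by
        have hx : ((x : ℝ≥0∞) + 1).toReal = (x : ℝ) + 1 := by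
          rw [ENNReal.toReal_add (by simp) (by simp), ENNReal.toReal_one,
            ENNReal.toReal_natCast]
        rw [ENNReal.toReal_mul, hx]
    _ = ((x : ℝ) + 1) * ∑' t, u ^ t * (μ (Sv t)).toReal := by
        rw [hreal Sv, hQe]
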